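/- Let ξ and η be smooth vector fields on ℝᵈ with flows φ_s and ψ_s, and let P₄(s) = ψ_{-s}(φ_{-s}(ψ_s(φ_s(P₀)))). Then for any smooth function f defined near P₀, lim_{s→0} (f(P₄(s)) - f(P₀))/s² = [ξ,η]_{P₀}(f). -/

import Mathlib

open Filter Set Topology intervalIntegral

variable {E : Type*} [NormedAddCommGroup E] [NormedSpace ℝ E]

/-- Chain rule along a curve. -/
lemma curve_chain {c : ℝ → E} {w : ℝ → E} (hc : ∀ u, HasDerivAt c (w u) u)
    {F : Type*} [NormedAddCommGroup F] [NormedSpace ℝ F]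
    {g : E → F} (hg : ContDiff ℝ (⊤ : ℕ∞) g) (t : ℝ) :
    HasDerivAt (fun u => g (c u)) (fderiv ℝ g (c t) (w t)) t :=
  ((hg.differentiable (by simp) (c t)).hasFDerivAt).comp_hasDerivAt t (hc t)

lemma curve_cont {c : ℝ → E} {w : ℝ → E} (hc : ∀ u, HasDerivAt c (w u) u) :
    Continuous c :=
  continuous_iff_continuousAt.2 fun u => (hc u).continuousAt

/-- FTC along a curve. -/
lemma curveFTC {c : ℝ → E} {w : ℝ → E} (hc : ∀ u, HasDerivAt c (w u) u)
    (hw : Continuous w) {g : E → ℝ} (hg : ContDiff ℝ (⊤ : ℕ∞) g) (t : ℝ) :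
    g (c t) = g (c 0) + ∫ u in (0:ℝ)..t, fderiv ℝ g (c u) (w u) := by
  have h := intervalIntegral.integral_eq_sub_of_hasDerivAt
    (a := (0:ℝ)) (b := t) (f := fun u => g (c u)) (f' := fun u => fderiv ℝ g (c u) (w u))
    (fun u _ => curve_chain hc hg u)
    ((((hg.continuous_fderiv (by simp)).comp (curve_cont hc)).clm_apply hw).intervalIntegrable _ _)
  rw [h]; ring

/-- One-sided escape bound. -/
lemma escape_right {c : ℝ → E} {w : ℝ → E} {P₀ : E} {M ρ t : ℝ}
    (hc : ∀ u, HasDerivAt c (w u) u)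
    (hbdd : ∀ u, ‖c u - P₀‖ ≤ 1 → ‖w u‖ ≤ M) (hM : 0 < M)
    (h0 : ‖c 0 - P₀‖ ≤ ρ) (hρ : 0 ≤ ρ) (ht : 0 ≤ t) (h1 : ρ + 2 * M * t ≤ 1) :
    ∀ u ∈ Icc (0:ℝ) t, ‖c u - P₀‖ ≤ ρ + 2 * M * t := by
  have key : ∀ u ∈ Icc (0:ℝ) t, ‖c u - P₀‖ ≤ ρ + 2 * M * u := by
    apply image_norm_le_of_norm_deriv_right_lt_deriv_boundary
      (f := fun u => c u - P₀) (f' := w) (B := fun u => ρ + 2 * M * u) (B' := fun _ => 2 * M)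
    · exact ((curve_cont hc).sub continuous_const).continuousOn
    · exact fun x _ => ((hc x).sub_const P₀).hasDerivWithinAt
    · simpa using h0
    · intro x
      simpa using ((hasDerivAt_id x).const_mul (2*M)).const_add ρ
    · intro x hx heq
      have hb : ‖c x - P₀‖ ≤ 1 := by
        rw [heq]
        nlinarith [hx.1, hx.2]
      have := hbdd x hb
      linarith
  intro u hu
  have := key u hu
  nlinarith [hu.1, hu.2]

/-- Two-sided escape bound. -/
lemma escape_two {c : ℝ → E} {w : ℝ → E} {P₀ : E} {M ρ t : ℝ}
    (hc : ∀ u, HasDerivAt c (w u) u)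
    (hbdd : ∀ u, ‖c u - P₀‖ ≤ 1 → ‖w u‖ ≤ M) (hM : 0 < M)
    (h0 : ‖c 0 - P₀‖ ≤ ρ) (hρ : 0 ≤ ρ) (h1 : ρ + 2 * M * |t| ≤ 1) :
    ∀ u ∈ uIcc (0:ℝ) t, ‖c u - P₀‖ ≤ ρ + 2 * M * |t| := by
  intro u hu
  rcases le_total 0 t with h | h
  · rw [uIcc_of_le h] at hu
    rw [abs_of_nonneg h] at h1 ⊢
    exact escape_right hc hbdd hM h0 hρ h h1 u hu
  · rw [uIcc_of_ge h] at hu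
    rw [abs_of_nonpos h] at h1 ⊢
    have hc' : ∀ u, HasDerivAt (fun v => c (-v)) ((-1 : ℝ) • w (-u)) u :=
      fun u => (hc (-u)).scomp u (hasDerivAt_neg u)
    have := escape_right (c := fun v => c (-v)) (w := fun u => (-1 : ℝ) • w (-u))
      hc' (fun u hb => by simpa using hbdd (-u) hb) hM (by simpa using h0) hρ
      (by linarith : (0:ℝ) ≤ -t) h1 (-u) ⟨by linarith [hu.2], by linarith [hu.1]⟩
    simpa using this

lemma tendsto_rect (k : ℝ → ℝ → ℝ) (L : ℝ) (hk : ∀ s, Continuous (k s))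
    (hb : ∀ ε > 0, ∀ᶠ s in 𝓝[≠] (0:ℝ), ∀ v ∈ uIcc (0:ℝ) s, |k s v - L| ≤ ε) :
    Tendsto (fun s => (s * ∫ v in (0:ℝ)..s, k s v) / s ^ 2) (𝓝[≠] (0:ℝ)) (𝓝 L) := by
  rw [Metric.tendsto_nhds]
  intro ε hε
  filter_upwards [hb (ε/2) (by positivity), self_mem_nhdsWithin] with s hs hs0
  have hs0' : (s:ℝ) ≠ 0 := hs0
  have hint : (∫ v in (0:ℝ)..s, k s v) - s * L = ∫ v in (0:ℝ)..s, (k s v - L) := by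
    rw [intervalIntegral.integral_sub ((hk s).intervalIntegrable _ _)
      intervalIntegrable_const, intervalIntegral.integral_const]
    congr 1
    simp [smul_eq_mul]
  have hnorm : ‖∫ v in (0:ℝ)..s, (k s v - L)‖ ≤ (ε/2) * |s - 0| :=
    intervalIntegral.norm_integral_le_of_norm_le_const
      (fun v hv => hs v (uIoc_subset_uIcc hv))
  rw [Real.dist_eq]
  have heq : (s * ∫ v in (0:ℝ)..s, k s v) / s ^ 2 - L
      = (∫ v in (0:ℝ)..s, (k s v - L)) / s := by
    rw [← hint]
    field_simp
  rw [heq, abs_div]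
  rw [Real.norm_eq_abs] at hnorm
  rw [sub_zero] at hnorm
  have h2 : |∫ v in (0:ℝ)..s, (k s v - L)| / |s| ≤ ε/2 := by
    rw [div_le_iff₀ (abs_pos.2 hs0')]
    linarith [hnorm]
  linarith

lemma tendsto_tri (k : ℝ → ℝ → ℝ) (L : ℝ) (hk : ∀ s, Continuous (k s))
    (hb : ∀ ε > 0, ∀ᶠ s in 𝓝[≠] (0:ℝ), ∀ v ∈ uIcc (0:ℝ) s, |k s v - L| ≤ ε) :
    Tendsto (fun s => (∫ u in (0:ℝ)..s, ∫ v in (0:ℝ)..u, k s v) / s ^ 2)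
      (𝓝[≠] (0:ℝ)) (𝓝 (L/2)) := by
  rw [Metric.tendsto_nhds]
  intro ε hε
  filter_upwards [hb (ε/2) (by positivity), self_mem_nhdsWithin] with s hs hs0
  have hs0' : (s:ℝ) ≠ 0 := hs0
  have hgcont : Continuous (fun u => ∫ v in (0:ℝ)..u, k s v) :=
    intervalIntegral.continuous_primitive (fun _ _ => (hk s).intervalIntegrable _ _) 0
  -- inner estimate
  have hinner : ∀ u ∈ uIcc (0:ℝ) s, |(∫ v in (0:ℝ)..u, k s v) - u * L| ≤ (ε/2) * |s| := by
    intro u hu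
    have hsub : uIcc (0:ℝ) u ⊆ uIcc (0:ℝ) s := uIcc_subset_uIcc left_mem_uIcc hu
    have hint : (∫ v in (0:ℝ)..u, k s v) - u * L = ∫ v in (0:ℝ)..u, (k s v - L) := by
      rw [intervalIntegral.integral_sub ((hk s).intervalIntegrable _ _)
        intervalIntegrable_const, intervalIntegral.integral_const]
      congr 1
      simp [smul_eq_mul]
    rw [hint]
    have h1 : ‖∫ v in (0:ℝ)..u, (k s v - L)‖ ≤ (ε/2) * |u - 0| :=
      intervalIntegral.norm_integral_le_of_norm_le_const
        (fun v hv => hs v (hsub (uIoc_subset_uIcc hv)))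
    rw [Real.norm_eq_abs, sub_zero] at h1
    have h2 : |u| ≤ |s| := by
      rcases le_total 0 s with h | h
      · rw [uIcc_of_le h] at hu
        rw [abs_of_nonneg hu.1, abs_of_nonneg h]; exact hu.2
      · rw [uIcc_of_ge h] at hu
        rw [abs_of_nonpos hu.2, abs_of_nonpos h]; linarith [hu.1]
    nlinarith [abs_nonneg (∫ v in (0:ℝ)..u, (k s v - L))]
  -- outer estimate
  have houter : (∫ u in (0:ℝ)..s, ∫ v in (0:ℝ)..u, k s v) - s^2/2 * L
      = ∫ u in (0:ℝ)..s, ((∫ v in (0:ℝ)..u, k s v) - u * L) := by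
    rw [intervalIntegral.integral_sub (hgcont.intervalIntegrable _ _)
      (Continuous.intervalIntegrable (by fun_prop : Continuous fun u : ℝ => u * L) _ _)]
    have h3 : ∫ u in (0:ℝ)..s, u * L = s^2/2 * L := by
      rw [intervalIntegral.integral_mul_const, integral_id]
      ring
    rw [h3]
  have hnorm : ‖∫ u in (0:ℝ)..s, ((∫ v in (0:ℝ)..u, k s v) - u * L)‖ ≤ ((ε/2) * |s|) * |s - 0| :=
    intervalIntegral.norm_integral_le_of_norm_le_const
      (fun u hu => hinner u (uIoc_subset_uIcc hu))
  rw [Real.norm_eq_abs, sub_zero] at hnorm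
  rw [Real.dist_eq]
  have heq : (∫ u in (0:ℝ)..s, ∫ v in (0:ℝ)..u, k s v) / s ^ 2 - L/2
      = ((∫ u in (0:ℝ)..s, ((∫ v in (0:ℝ)..u, k s v) - u * L))) / s^2 := by
    have hs2 : s^2 ≠ 0 := pow_ne_zero _ hs0'
    rw [← houter, sub_div]
    have hL : (s^2/2 * L)/s^2 = L/2 := by
      rw [div_eq_iff hs2]; ring
    rw [hL]
  rw [heq, abs_div]
  have hsq : |s^2| = |s| * |s| := by rw [sq, abs_mul]
  have h2 : |∫ u in (0:ℝ)..s, ((∫ v in (0:ℝ)..u, k s v) - u * L)| / |s^2| ≤ ε/2 := by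
    rw [div_le_iff₀ (by positivity : (0:ℝ) < |s^2|)]
    calc |∫ u in (0:ℝ)..s, ((∫ v in (0:ℝ)..u, k s v) - u * L)| ≤ (ε/2) * |s| * |s| := hnorm
      _ = ε/2 * |s^2| := by rw [hsq]; ring
  linarith

lemma hb_of_curve {κ : E → ℝ} (hκ : Continuous κ) (P₀ : E) (c : ℝ → ℝ → E)
    (hcurve : ∀ ε > 0, ∀ᶠ s in 𝓝[≠] (0:ℝ), ∀ v ∈ uIcc (0:ℝ) s, ‖c s v - P₀‖ ≤ ε) :
    ∀ ε > 0, ∀ᶠ s in 𝓝[≠] (0:ℝ), ∀ v ∈ uIcc (0:ℝ) s, |κ (c s v) - κ P₀| ≤ ε := by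
  intro ε hε
  obtain ⟨δ, hδ, hδ'⟩ := Metric.continuousAt_iff.1 (hκ.continuousAt (x := P₀)) ε hε
  filter_upwards [hcurve (δ/2) (by positivity)] with s hs v hv
  have := hδ' (show dist (c s v) P₀ < δ by
    rw [dist_eq_norm]; linarith [hs v hv])
  rw [Real.dist_eq] at this
  linarith

lemma contDiff_fderiv_apply {g : E → ℝ} {V : E → E}
    (hg : ContDiff ℝ (⊤ : ℕ∞) g) (hV : ContDiff ℝ (⊤ : ℕ∞) V) :
    ContDiff ℝ (⊤ : ℕ∞) (fun x => fderiv ℝ g x (V x)) :=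
  (hg.fderiv_right (mod_cast le_top)).clm_apply hV

/-- Derivative of `g` along vector field `V`. -/
noncomputable def Dapp (g : E → ℝ) (V : E → E) : E → ℝ := fun x => fderiv ℝ g x (V x)

lemma curveFTC_pos {c : ℝ → E} {V : E → E} (hc : ∀ u, HasDerivAt c (V (c u)) u)
    (hV : Continuous V) {g : E → ℝ} (hg : ContDiff ℝ (⊤ : ℕ∞) g) (t : ℝ) :
    g (c t) = g (c 0) + ∫ u in (0:ℝ)..t, Dapp g V (c u) :=
  curveFTC hc (hV.comp (curve_cont hc)) hg t

lemma curveFTC_neg {c : ℝ → E} {V : E → E} (hc : ∀ u, HasDerivAt c (-(V (c u))) u)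
    (hV : Continuous V) {g : E → ℝ} (hg : ContDiff ℝ (⊤ : ℕ∞) g) (t : ℝ) :
    g (c t) = g (c 0) - ∫ u in (0:ℝ)..t, Dapp g V (c u) := by
  have h := curveFTC (w := fun u => -(V (c u))) hc
    ((hV.comp (curve_cont hc)).neg) hg t
  simp only [map_neg] at h
  rw [intervalIntegral.integral_neg] at h
  simp only [Dapp]
  rw [h]; ring

lemma split_const_add (g : ℝ → ℝ) (cst : ℝ) (hg : Continuous g) (s : ℝ) :
    ∫ u in (0:ℝ)..s, (cst + ∫ v in (0:ℝ)..u, g v)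
      = s * cst + ∫ u in (0:ℝ)..s, ∫ v in (0:ℝ)..u, g v := by
  rw [intervalIntegral.integral_add intervalIntegrable_const
    ((intervalIntegral.continuous_primitive (fun _ _ => hg.intervalIntegrable _ _) 0).intervalIntegrable _ _),
    intervalIntegral.integral_const]
  simp [smul_eq_mul]

lemma split_const_sub (g : ℝ → ℝ) (cst : ℝ) (hg : Continuous g) (s : ℝ) :
    ∫ u in (0:ℝ)..s, (cst - ∫ v in (0:ℝ)..u, g v)
      = s * cst - ∫ u in (0:ℝ)..s, ∫ v in (0:ℝ)..u, g v := by
  rw [intervalIntegral.integral_sub intervalIntegrable_const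
    ((intervalIntegral.continuous_primitive (fun _ _ => hg.intervalIntegrable _ _) 0).intervalIntegrable _ _),
    intervalIntegral.integral_const]
  simp [smul_eq_mul]

/-- The second-order gap of the closed-up flow quadrilateral measures the Lie bracket:
with `P₄(s) = ψ_{-s}(φ_{-s}(ψ_s(φ_s(P₀))))`,
`(f(P₄(s)) - f(P₀))/s² → [ξ,η]_{P₀}(f)` as `s → 0`. -/
theorem flow_quadrilateral_gap_bracket_closed
    {d : ℕ} (ξ η : (Fin d → ℝ) → (Fin d → ℝ))
    (hξ : ContDiff ℝ (⊤ : ℕ∞) ξ) (hη : ContDiff ℝ (⊤ : ℕ∞) η)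
    (φ ψ : ℝ → (Fin d → ℝ) → (Fin d → ℝ))
    (hφ0 : ∀ x, φ 0 x = x) (hψ0 : ∀ x, ψ 0 x = x)
    (hφ : ∀ x s, HasDerivAt (fun t => φ t x) (ξ (φ s x)) s)
    (hψ : ∀ x s, HasDerivAt (fun t => ψ t x) (η (ψ s x)) s)
    (P₀ : Fin d → ℝ) (f : (Fin d → ℝ) → ℝ) (hf : ContDiff ℝ (⊤ : ℕ∞) f) :
    Tendsto
      (fun s : ℝ => (f (ψ (-s) (φ (-s) (ψ s (φ s P₀)))) - f P₀) / s ^ 2)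
      (nhdsWithin 0 {s : ℝ | s ≠ 0})
      (nhds (fderiv ℝ (fun x => fderiv ℝ f x (η x)) P₀ (ξ P₀)
        - fderiv ℝ (fun x => fderiv ℝ f x (ξ x)) P₀ (η P₀))) := by
  -- smoothness facts
  have hLξf : ContDiff ℝ (⊤ : ℕ∞) (Dapp f ξ) := contDiff_fderiv_apply hf hξ
  have hLηf : ContDiff ℝ (⊤ : ℕ∞) (Dapp f η) := contDiff_fderiv_apply hf hη
  have hκa : ContDiff ℝ (⊤ : ℕ∞) (Dapp (Dapp f ξ) ξ) := contDiff_fderiv_apply hLξf hξ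
  have hκb : ContDiff ℝ (⊤ : ℕ∞) (Dapp (Dapp f η) ξ) := contDiff_fderiv_apply hLηf hξ
  have hκc : ContDiff ℝ (⊤ : ℕ∞) (Dapp (Dapp f ξ) η) := contDiff_fderiv_apply hLξf hη
  have hκd : ContDiff ℝ (⊤ : ℕ∞) (Dapp (Dapp f η) η) := contDiff_fderiv_apply hLηf hη
  -- curve derivative facts
  have hc1d : ∀ u, HasDerivAt (fun v => φ v P₀) (ξ (φ u P₀)) u := hφ P₀
  have hc2d : ∀ s u, HasDerivAt (fun v => ψ v (φ s P₀)) (η (ψ u (φ s P₀))) u :=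
    fun s => hψ (φ s P₀)
  have hc3d : ∀ s u, HasDerivAt (fun v => φ (-v) (ψ s (φ s P₀)))
      (-(ξ (φ (-u) (ψ s (φ s P₀))))) u := by
    intro s u
    have := (hφ (ψ s (φ s P₀)) (-u)).scomp u (hasDerivAt_neg u)
    simpa [Function.comp_def] using this
  have hc4d : ∀ s u, HasDerivAt (fun v => ψ (-v) (φ (-s) (ψ s (φ s P₀))))
      (-(η (ψ (-u) (φ (-s) (ψ s (φ s P₀)))))) u := by
    intro s u
    have := (hψ (φ (-s) (ψ s (φ s P₀))) (-u)).scomp u (hasDerivAt_neg u)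
    simpa [Function.comp_def] using this
  -- the key exact identity
  have key : ∀ s : ℝ, f (ψ (-s) (φ (-s) (ψ s (φ s P₀)))) - f P₀ =
        (∫ u in (0:ℝ)..s, ∫ v in (0:ℝ)..u, Dapp (Dapp f ξ) ξ (φ v P₀))
      + (∫ u in (0:ℝ)..s, ∫ v in (0:ℝ)..u, Dapp (Dapp f η) η (ψ v (φ s P₀)))
      + (∫ u in (0:ℝ)..s, ∫ v in (0:ℝ)..u, Dapp (Dapp f ξ) ξ (φ (-v) (ψ s (φ s P₀))))
      + (∫ u in (0:ℝ)..s, ∫ v in (0:ℝ)..u, Dapp (Dapp f η) η (ψ (-v) (φ (-s) (ψ s (φ s P₀)))))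
      + s * (∫ v in (0:ℝ)..s, -(Dapp (Dapp f ξ) ξ (φ v P₀)))
      + s * (∫ v in (0:ℝ)..s, -(Dapp (Dapp f ξ) η (ψ v (φ s P₀))))
      + s * (∫ v in (0:ℝ)..s, -(Dapp (Dapp f η) η (ψ v (φ s P₀))))
      + s * (∫ v in (0:ℝ)..s, Dapp (Dapp f η) ξ (φ (-v) (ψ s (φ s P₀)))) := by
    intro s
    -- first-level FTC
    have F1 : f (φ s P₀) = f P₀ + ∫ u in (0:ℝ)..s, Dapp f ξ (φ u P₀) := by
      simpa only [hφ0] using curveFTC_pos hc1d hξ.continuous hf s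
    have F2 : f (ψ s (φ s P₀)) = f (φ s P₀) + ∫ u in (0:ℝ)..s, Dapp f η (ψ u (φ s P₀)) := by
      simpa only [hψ0] using curveFTC_pos (hc2d s) hη.continuous hf s
    have F3 : f (φ (-s) (ψ s (φ s P₀))) = f (ψ s (φ s P₀))
        - ∫ u in (0:ℝ)..s, Dapp f ξ (φ (-u) (ψ s (φ s P₀))) := by
      simpa only [neg_zero, hφ0] using curveFTC_neg (hc3d s) hξ.continuous hf s
    have F4 : f (ψ (-s) (φ (-s) (ψ s (φ s P₀)))) = f (φ (-s) (ψ s (φ s P₀)))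
        - ∫ u in (0:ℝ)..s, Dapp f η (ψ (-u) (φ (-s) (ψ s (φ s P₀)))) := by
      simpa only [neg_zero, hψ0] using curveFTC_neg (hc4d s) hη.continuous hf s
    -- second-level FTC, pointwise in u
    have E1 : ∀ u : ℝ, Dapp f ξ (φ u P₀)
        = Dapp f ξ P₀ + ∫ v in (0:ℝ)..u, Dapp (Dapp f ξ) ξ (φ v P₀) := fun u => by
      simpa only [hφ0] using curveFTC_pos hc1d hξ.continuous hLξf u
    have E2 : ∀ u : ℝ, Dapp f η (ψ u (φ s P₀))
        = Dapp f η (φ s P₀) + ∫ v in (0:ℝ)..u, Dapp (Dapp f η) η (ψ v (φ s P₀)) := fun u => by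
      simpa only [hψ0] using curveFTC_pos (hc2d s) hη.continuous hLηf u
    have E3 : ∀ u : ℝ, Dapp f ξ (φ (-u) (ψ s (φ s P₀)))
        = Dapp f ξ (ψ s (φ s P₀))
          - ∫ v in (0:ℝ)..u, Dapp (Dapp f ξ) ξ (φ (-v) (ψ s (φ s P₀))) := fun u => by
      simpa only [neg_zero, hφ0] using curveFTC_neg (hc3d s) hξ.continuous hLξf u
    have E4 : ∀ u : ℝ, Dapp f η (ψ (-u) (φ (-s) (ψ s (φ s P₀))))
        = Dapp f η (φ (-s) (ψ s (φ s P₀)))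
          - ∫ v in (0:ℝ)..u, Dapp (Dapp f η) η (ψ (-v) (φ (-s) (ψ s (φ s P₀)))) := fun u => by
      simpa only [neg_zero, hψ0] using curveFTC_neg (hc4d s) hη.continuous hLηf u
    -- constant-point expansions
    have G2 : Dapp f ξ (ψ s (φ s P₀))
        = Dapp f ξ (φ s P₀) + ∫ v in (0:ℝ)..s, Dapp (Dapp f ξ) η (ψ v (φ s P₀)) := by
      simpa only [hψ0] using curveFTC_pos (hc2d s) hη.continuous hLξf s
    have G3 : Dapp f ξ (φ s P₀)
        = Dapp f ξ P₀ + ∫ v in (0:ℝ)..s, Dapp (Dapp f ξ) ξ (φ v P₀) := E1 s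
    have G4 : Dapp f η (φ (-s) (ψ s (φ s P₀)))
        = Dapp f η (ψ s (φ s P₀))
          - ∫ v in (0:ℝ)..s, Dapp (Dapp f η) ξ (φ (-v) (ψ s (φ s P₀))) := by
      simpa only [neg_zero, hφ0] using curveFTC_neg (hc3d s) hξ.continuous hLηf s
    have G5 : Dapp f η (ψ s (φ s P₀))
        = Dapp f η (φ s P₀) + ∫ v in (0:ℝ)..s, Dapp (Dapp f η) η (ψ v (φ s P₀)) := by
      simpa only [hψ0] using curveFTC_pos (hc2d s) hη.continuous hLηf s
    -- split the outer integrals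
    have H1 : ∫ u in (0:ℝ)..s, Dapp f ξ (φ u P₀)
        = s * Dapp f ξ P₀
          + ∫ u in (0:ℝ)..s, ∫ v in (0:ℝ)..u, Dapp (Dapp f ξ) ξ (φ v P₀) := by
      rw [intervalIntegral.integral_congr (g := fun u => Dapp f ξ P₀
        + ∫ v in (0:ℝ)..u, Dapp (Dapp f ξ) ξ (φ v P₀)) (fun u _ => E1 u)]
      exact split_const_add _ _ (hκa.continuous.comp (curve_cont hc1d)) s
    have H2 : ∫ u in (0:ℝ)..s, Dapp f η (ψ u (φ s P₀))
        = s * Dapp f η (φ s P₀)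
          + ∫ u in (0:ℝ)..s, ∫ v in (0:ℝ)..u, Dapp (Dapp f η) η (ψ v (φ s P₀)) := by
      rw [intervalIntegral.integral_congr (g := fun u => Dapp f η (φ s P₀)
        + ∫ v in (0:ℝ)..u, Dapp (Dapp f η) η (ψ v (φ s P₀))) (fun u _ => E2 u)]
      exact split_const_add _ _ (hκd.continuous.comp (curve_cont (hc2d s))) s
    have H3 : ∫ u in (0:ℝ)..s, Dapp f ξ (φ (-u) (ψ s (φ s P₀)))
        = s * Dapp f ξ (ψ s (φ s P₀))
          - ∫ u in (0:ℝ)..s, ∫ v in (0:ℝ)..u, Dapp (Dapp f ξ) ξ (φ (-v) (ψ s (φ s P₀))) := by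
      rw [intervalIntegral.integral_congr (g := fun u => Dapp f ξ (ψ s (φ s P₀))
        - ∫ v in (0:ℝ)..u, Dapp (Dapp f ξ) ξ (φ (-v) (ψ s (φ s P₀)))) (fun u _ => E3 u)]
      exact split_const_sub _ _ (hκa.continuous.comp (curve_cont (hc3d s))) s
    have H4 : ∫ u in (0:ℝ)..s, Dapp f η (ψ (-u) (φ (-s) (ψ s (φ s P₀))))
        = s * Dapp f η (φ (-s) (ψ s (φ s P₀)))
          - ∫ u in (0:ℝ)..s, ∫ v in (0:ℝ)..u, Dapp (Dapp f η) η (ψ (-v) (φ (-s) (ψ s (φ s P₀)))) := by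
      rw [intervalIntegral.integral_congr (g := fun u => Dapp f η (φ (-s) (ψ s (φ s P₀)))
        - ∫ v in (0:ℝ)..u, Dapp (Dapp f η) η (ψ (-v) (φ (-s) (ψ s (φ s P₀))))) (fun u _ => E4 u)]
      exact split_const_sub _ _ (hκd.continuous.comp (curve_cont (hc4d s))) s
    simp only [intervalIntegral.integral_neg]
    linear_combination F1 + F2 + F3 + F4 + H1 + H2 - H3 - H4 - s * G2 - s * G3 - s * G4 - s * G5
  -- a bound for the vector fields near P₀
  obtain ⟨Mξ, hMξ⟩ := (isCompact_closedBall P₀ 1).exists_bound_of_continuousOn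
    hξ.continuous.continuousOn
  obtain ⟨Mη, hMη⟩ := (isCompact_closedBall P₀ 1).exists_bound_of_continuousOn
    hη.continuous.continuousOn
  set M : ℝ := max (max Mξ Mη) 1 with hMdef
  have hM : (0:ℝ) < M := lt_of_lt_of_le one_pos (le_max_right _ _)
  have hbM : ∀ y : Fin d → ℝ, ‖y - P₀‖ ≤ 1 → ‖ξ y‖ ≤ M ∧ ‖η y‖ ≤ M := by
    intro y hy
    have hmem : y ∈ Metric.closedBall P₀ 1 := by
      rwa [Metric.mem_closedBall, dist_eq_norm]
    constructor
    · exact (hMξ y hmem).trans ((le_max_left _ _).trans (le_max_left _ _))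
    · exact (hMη y hmem).trans ((le_max_right _ _).trans (le_max_left _ _))
  -- uniform closeness of all four curves to P₀
  have hcurves : ∀ ε > 0, ∀ᶠ s in 𝓝[≠] (0:ℝ), ∀ v ∈ uIcc (0:ℝ) s,
      ‖φ v P₀ - P₀‖ ≤ ε ∧ ‖ψ v (φ s P₀) - P₀‖ ≤ ε ∧
      ‖φ (-v) (ψ s (φ s P₀)) - P₀‖ ≤ ε ∧
      ‖ψ (-v) (φ (-s) (ψ s (φ s P₀))) - P₀‖ ≤ ε := by
    intro ε hε
    have hδpos : (0:ℝ) < min (1/(8*M)) (ε/(8*M)) := by positivity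
    have hev : ∀ᶠ s in 𝓝[≠] (0:ℝ), |s| < min (1/(8*M)) (ε/(8*M)) := by
      apply eventually_nhdsWithin_of_eventually_nhds
      simpa using eventually_abs_sub_lt (0:ℝ) hδpos
    filter_upwards [hev] with s hs
    have hs1 : 8*M*|s| ≤ 1 := by
      have h1 : |s| < 1/(8*M) := lt_of_lt_of_le hs (min_le_left _ _)
      rw [lt_div_iff₀ (by positivity)] at h1
      nlinarith
    have hs2 : 8*M*|s| ≤ ε := by
      have h1 : |s| < ε/(8*M) := lt_of_lt_of_le hs (min_le_right _ _)
      rw [lt_div_iff₀ (by positivity)] at h1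
      nlinarith
    have habs : (0:ℝ) ≤ |s| := abs_nonneg s
    have b1 : ∀ v ∈ uIcc (0:ℝ) s, ‖φ v P₀ - P₀‖ ≤ 0 + 2*M*|s| :=
      escape_two hc1d (fun u h => (hbM _ h).1) hM (by simp [hφ0]) le_rfl (by nlinarith)
    have bA : ‖φ s P₀ - P₀‖ ≤ 0 + 2*M*|s| := b1 s right_mem_uIcc
    have b2 : ∀ v ∈ uIcc (0:ℝ) s, ‖ψ v (φ s P₀) - P₀‖ ≤ 2*M*|s| + 2*M*|s| :=
      escape_two (hc2d s) (fun u h => (hbM _ h).2) hM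
        (by simp only [hψ0]; linarith [bA]) (by positivity) (by nlinarith)
    have bB : ‖ψ s (φ s P₀) - P₀‖ ≤ 2*M*|s| + 2*M*|s| := b2 s right_mem_uIcc
    have b3 : ∀ v ∈ uIcc (0:ℝ) s, ‖φ (-v) (ψ s (φ s P₀)) - P₀‖ ≤ 4*M*|s| + 2*M*|s| :=
      escape_two (hc3d s) (fun u h => by rw [norm_neg]; exact (hbM _ h).1) hM
        (by simp only [neg_zero, hφ0]; linarith [bB]) (by positivity) (by nlinarith)
    have bC : ‖φ (-s) (ψ s (φ s P₀)) - P₀‖ ≤ 4*M*|s| + 2*M*|s| := b3 s right_mem_uIcc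
    have b4 : ∀ v ∈ uIcc (0:ℝ) s,
        ‖ψ (-v) (φ (-s) (ψ s (φ s P₀))) - P₀‖ ≤ 6*M*|s| + 2*M*|s| :=
      escape_two (hc4d s) (fun u h => by rw [norm_neg]; exact (hbM _ h).2) hM
        (by simp only [neg_zero, hψ0]; linarith [bC]) (by positivity) (by nlinarith)
    intro v hv
    exact ⟨(b1 v hv).trans (by nlinarith), (b2 v hv).trans (by nlinarith),
      (b3 v hv).trans (by nlinarith), (b4 v hv).trans (by nlinarith)⟩
  -- the eight limits
  have t1 := tendsto_tri (fun s v => Dapp (Dapp f ξ) ξ (φ v P₀)) (Dapp (Dapp f ξ) ξ P₀)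
    (fun s => hκa.continuous.comp (curve_cont hc1d))
    (hb_of_curve hκa.continuous P₀ (fun s v => φ v P₀)
      (fun ε hε => by filter_upwards [hcurves ε hε] with s hs v hv; exact (hs v hv).1))
  have t2 := tendsto_tri (fun s v => Dapp (Dapp f η) η (ψ v (φ s P₀))) (Dapp (Dapp f η) η P₀)
    (fun s => hκd.continuous.comp (curve_cont (hc2d s)))
    (hb_of_curve hκd.continuous P₀ (fun s v => ψ v (φ s P₀))
      (fun ε hε => by filter_upwards [hcurves ε hε] with s hs v hv; exact (hs v hv).2.1))
  have t3 := tendsto_tri (fun s v => Dapp (Dapp f ξ) ξ (φ (-v) (ψ s (φ s P₀))))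
    (Dapp (Dapp f ξ) ξ P₀)
    (fun s => hκa.continuous.comp (curve_cont (hc3d s)))
    (hb_of_curve hκa.continuous P₀ (fun s v => φ (-v) (ψ s (φ s P₀)))
      (fun ε hε => by filter_upwards [hcurves ε hε] with s hs v hv; exact (hs v hv).2.2.1))
  have t4 := tendsto_tri (fun s v => Dapp (Dapp f η) η (ψ (-v) (φ (-s) (ψ s (φ s P₀)))))
    (Dapp (Dapp f η) η P₀)
    (fun s => hκd.continuous.comp (curve_cont (hc4d s)))
    (hb_of_curve hκd.continuous P₀ (fun s v => ψ (-v) (φ (-s) (ψ s (φ s P₀))))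
      (fun ε hε => by filter_upwards [hcurves ε hε] with s hs v hv; exact (hs v hv).2.2.2))
  have t5 := tendsto_rect (fun s v => -(Dapp (Dapp f ξ) ξ (φ v P₀))) (-(Dapp (Dapp f ξ) ξ P₀))
    (fun s => (hκa.continuous.comp (curve_cont hc1d)).neg)
    (hb_of_curve hκa.continuous.neg P₀ (fun s v => φ v P₀)
      (fun ε hε => by filter_upwards [hcurves ε hε] with s hs v hv; exact (hs v hv).1))
  have t6 := tendsto_rect (fun s v => -(Dapp (Dapp f ξ) η (ψ v (φ s P₀))))
    (-(Dapp (Dapp f ξ) η P₀))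
    (fun s => (hκc.continuous.comp (curve_cont (hc2d s))).neg)
    (hb_of_curve hκc.continuous.neg P₀ (fun s v => ψ v (φ s P₀))
      (fun ε hε => by filter_upwards [hcurves ε hε] with s hs v hv; exact (hs v hv).2.1))
  have t7 := tendsto_rect (fun s v => -(Dapp (Dapp f η) η (ψ v (φ s P₀))))
    (-(Dapp (Dapp f η) η P₀))
    (fun s => (hκd.continuous.comp (curve_cont (hc2d s))).neg)
    (hb_of_curve hκd.continuous.neg P₀ (fun s v => ψ v (φ s P₀))
      (fun ε hε => by filter_upwards [hcurves ε hε] with s hs v hv; exact (hs v hv).2.1))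
  have t8 := tendsto_rect (fun s v => Dapp (Dapp f η) ξ (φ (-v) (ψ s (φ s P₀))))
    (Dapp (Dapp f η) ξ P₀)
    (fun s => hκb.continuous.comp (curve_cont (hc3d s)))
    (hb_of_curve hκb.continuous P₀ (fun s v => φ (-v) (ψ s (φ s P₀)))
      (fun ε hε => by filter_upwards [hcurves ε hε] with s hs v hv; exact (hs v hv).2.2.1))
  have total := ((((((t1.add t2).add t3).add t4).add t5).add t6).add t7).add t8
  have hfun : (fun s : ℝ => (f (ψ (-s) (φ (-s) (ψ s (φ s P₀)))) - f P₀) / s ^ 2)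
      = (fun s : ℝ =>
        (∫ u in (0:ℝ)..s, ∫ v in (0:ℝ)..u, Dapp (Dapp f ξ) ξ (φ v P₀)) / s ^ 2
        + (∫ u in (0:ℝ)..s, ∫ v in (0:ℝ)..u, Dapp (Dapp f η) η (ψ v (φ s P₀))) / s ^ 2
        + (∫ u in (0:ℝ)..s, ∫ v in (0:ℝ)..u, Dapp (Dapp f ξ) ξ (φ (-v) (ψ s (φ s P₀)))) / s ^ 2
        + (∫ u in (0:ℝ)..s, ∫ v in (0:ℝ)..u,
            Dapp (Dapp f η) η (ψ (-v) (φ (-s) (ψ s (φ s P₀))))) / s ^ 2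
        + (s * ∫ v in (0:ℝ)..s, -(Dapp (Dapp f ξ) ξ (φ v P₀))) / s ^ 2
        + (s * ∫ v in (0:ℝ)..s, -(Dapp (Dapp f ξ) η (ψ v (φ s P₀)))) / s ^ 2
        + (s * ∫ v in (0:ℝ)..s, -(Dapp (Dapp f η) η (ψ v (φ s P₀)))) / s ^ 2
        + (s * ∫ v in (0:ℝ)..s, Dapp (Dapp f η) ξ (φ (-v) (ψ s (φ s P₀)))) / s ^ 2) :=
    funext fun s => by rw [key s]; ring
  rw [hfun]
  convert total using 2
  · ext x; simp
  unfold Dapp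
  ring
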